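/- arXiv:2011.12940 — 4 statements merged into one kernel-verified Lean document; each statement's English description precedes it below -/
import Mathlib

section
/- Let G be a group and U ≤ G a cyclic subgroup of finite index in G. Then for any g ∈ G, the element g normalizes the intersection U ∩ gUg⁻¹. -/
/-- In a cyclic group, a subgroup of finite index `n` equals `zpowers (c ^ n)`
for a generator `c`. -/
theorem cyclic_subgroup_eq_zpowers {C : Type*} [Group C] {c : C}
    (hc : ∀ x : C, x ∈ Subgroup.zpowers c) (A : Subgroup C) (hA : A.index ≠ 0) :
    A = Subgroup.zpowers (c ^ A.index) := by
  have hcomm : ∀ a b : C, a * b = b * a := by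
    intro a b
    obtain ⟨i, rfl⟩ := hc a
    obtain ⟨j, rfl⟩ := hc b
    rw [← zpow_add, ← zpow_add, add_comm]
  haveI : A.Normal := by
    refine ⟨fun x hx g => ?_⟩
    rw [hcomm g x, mul_assoc, mul_inv_cancel, mul_one]
    exact hx
  haveI : A.FiniteIndex := ⟨hA⟩
  have hcn : c ^ A.index ∈ A := A.pow_index_mem c
  set P := Subgroup.zpowers (c ^ A.index) with hP
  have hPA : P ≤ A := Subgroup.zpowers_le.mpr hcn
  haveI : P.Normal := by
    refine ⟨fun x hx g => ?_⟩
    rw [hcomm g x, mul_assoc, mul_inv_cancel, mul_one]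
    exact hx
  -- P has index dividing A.index
  have hgen : ∀ y : C ⧸ P, y ∈ Subgroup.zpowers ((c : C ⧸ P)) := by
    intro y
    obtain ⟨x, rfl⟩ := QuotientGroup.mk_surjective y
    obtain ⟨k, rfl⟩ := hc x
    exact ⟨k, by simp⟩
  have hPdvd : P.index ∣ A.index := by
    have h1 : (c : C ⧸ P) ^ A.index = 1 := by
      rw [← QuotientGroup.mk_pow, QuotientGroup.eq_one_iff]
      exact Subgroup.mem_zpowers _
    have h2 : P.index = orderOf ((c : C ⧸ P)) := by
      have htop : Subgroup.zpowers ((c : C ⧸ P)) = ⊤ :=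
        top_unique fun y _ => hgen y
      rw [← Nat.card_zpowers, htop]
      exact (Nat.card_congr Subgroup.topEquiv.toEquiv).symm
    rw [h2]
    exact orderOf_dvd_of_pow_eq_one h1
  have hrel : P.relIndex A * A.index = P.index := Subgroup.relIndex_mul_index hPA
  have hrel1 : P.relIndex A = 1 := by
    have h1 : P.relIndex A * A.index ∣ A.index := hrel ▸ hPdvd
    have h2 := Nat.le_of_dvd (Nat.pos_of_ne_zero hA) h1
    have h3 : P.relIndex A ≠ 0 := by
      intro h0
      rw [h0, zero_mul] at hrel
      rw [← hrel] at hPdvd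
      exact hA (Nat.eq_zero_of_zero_dvd hPdvd)
    have h4 : P.relIndex A ≤ 1 := by
      have h2' : P.relIndex A * A.index ≤ 1 * A.index := by simpa using h2
      exact Nat.le_of_mul_le_mul_right h2' (Nat.pos_of_ne_zero hA)
    omega
  exact le_antisymm (Subgroup.relIndex_eq_one.mp hrel1) hPA

/-- In a cyclic group, two subgroups with the same nonzero index are equal. -/
theorem cyclic_subgroup_index_inj {C : Type*} [Group C] (hC : IsCyclic C)
    {A B : Subgroup C} (hA : A.index ≠ 0) (h : A.index = B.index) : A = B := by
  obtain ⟨c, hc⟩ := hC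
  rw [cyclic_subgroup_eq_zpowers hc A hA, cyclic_subgroup_eq_zpowers hc B (h ▸ hA), h]

/-- If `U` is a cyclic subgroup of finite index in a group `G`, then any `g ∈ G`
normalizes `U ⊓ gUg⁻¹`. -/
theorem normalizes_inter_conj (G : Type*) [Group G] (U : Subgroup G)
    (hU : IsCyclic U) [U.FiniteIndex] (g : G) :
    g ∈ Subgroup.normalizer (U ⊓ Subgroup.map (MulAut.conj g).toMonoidHom U) := by
  set f := (MulAut.conj g).toMonoidHom with hf
  have hfsurj : Function.Surjective f := (MulAut.conj g).surjective
  have hfinj : Function.Injective f := (MulAut.conj g).injective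
  have hker : ∀ (H : Subgroup G), f.ker ≤ H := by
    intro H
    rw [(MonoidHom.ker_eq_bot_iff f).mpr hfinj]
    exact bot_le
  have hindex_map : ∀ H : Subgroup G, (Subgroup.map f H).index = H.index := fun H =>
    Subgroup.index_map_eq H hfsurj (hker H)
  set C := Subgroup.map f U with hC
  haveI : C.FiniteIndex := ⟨by rw [hindex_map U]; exact Subgroup.FiniteIndex.index_ne_zero⟩
  set V := U ⊓ C with hV
  haveI : V.FiniteIndex := inferInstance
  set W := Subgroup.map f V with hW
  have hVC : V ≤ C := inf_le_right
  have hWC : W ≤ C := by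
    rw [hW, hC]
    exact Subgroup.map_mono inf_le_left
  have hWV : W.index = V.index := hindex_map V
  -- C is cyclic
  have hCcyc : IsCyclic C := by
    exact isCyclic_of_surjective ((MulAut.conj g).subgroupMap U)
      ((MulAut.conj g).subgroupMap U).surjective
  -- indexes within C
  have hCne : C.index ≠ 0 := Subgroup.FiniteIndex.index_ne_zero
  have hVrel : V.relIndex C * C.index = V.index := Subgroup.relIndex_mul_index hVC
  have hWrel : W.relIndex C * C.index = W.index := Subgroup.relIndex_mul_index hWC
  have hreleq : V.relIndex C = W.relIndex C := by
    have : V.relIndex C * C.index = W.relIndex C * C.index := by rw [hVrel, hWrel, hWV]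
    exact Nat.eq_of_mul_eq_mul_right (Nat.pos_of_ne_zero hCne) this
  have hVrelne : V.relIndex C ≠ 0 := by
    intro h0
    rw [h0, zero_mul] at hVrel
    exact Subgroup.FiniteIndex.index_ne_zero hVrel.symm
  have heq : V.subgroupOf C = W.subgroupOf C :=
    cyclic_subgroup_index_inj hCcyc hVrelne hreleq
  have hVW : V = W := by
    have h2 := Subgroup.subgroupOf_inj.mp heq
    rwa [inf_of_le_left hVC, inf_of_le_left hWC] at h2
  change g ∈ Subgroup.normalizer ((V : Subgroup G) : Set G)
  rw [Subgroup.mem_normalizer_iff]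
  intro h
  constructor
  · intro hh
    have : f h ∈ W := Subgroup.mem_map_of_mem f hh
    rw [← hVW] at this
    simpa [hf] using this
  · intro hh
    have : f h ∈ V := by simpa [hf] using hh
    rw [hVW, hW] at this
    obtain ⟨x, hx, hxh⟩ := this
    rwa [← hfinj hxh]
end

section
/- Let G be a finite group generated by two elements u and h, and let A = {a ∈ G : a centralizes both u and h⁻¹u⁻¹h, and a·h·a⁻¹ ∈ ⟨u⟩·h}. Then the map z : A → ⟨u⟩ sending a to the commutator [a,h] = a·h·a⁻¹·h⁻¹ is a group homomorphism whose kernel equals the center Z(G). -/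
/-- Let `G` be a finite group generated by `u` and `h`, and let
`A = {a ∈ G : a` centralizes `u` and `h⁻¹u⁻¹h`, and `a h a⁻¹ ∈ ⟨u⟩·h}`.
Then `a ↦ [a,h] = a h a⁻¹ h⁻¹` is a group homomorphism `A → ⟨u⟩` whose kernel
is exactly the center `Z(G)`. -/
theorem commutator_with_h_is_hom_with_kernel_center (G : Type*) [Group G] [Finite G]
    (u h : G) (hgen : Subgroup.closure {u, h} = ⊤)
    (A : Set G)
    (hA : A = {a : G | a * u = u * a ∧
        a * (h⁻¹ * u⁻¹ * h) = (h⁻¹ * u⁻¹ * h) * a ∧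
        a * h * a⁻¹ * h⁻¹ ∈ Subgroup.zpowers u}) :
    (∀ a ∈ A, ∀ b ∈ A, a * b ∈ A ∧
        (a * b) * h * (a * b)⁻¹ * h⁻¹ = (a * h * a⁻¹ * h⁻¹) * (b * h * b⁻¹ * h⁻¹)) ∧
      {a ∈ A | a * h * a⁻¹ * h⁻¹ = 1} = (Subgroup.center G : Set G) := by
  subst hA
  constructor
  · rintro a ⟨hau, ha2, m, hm⟩ b ⟨hbu, hb2, n, hn⟩
    simp only at hm hn
    have cau : Commute a u := hau
    have key : (a * b) * h * (a * b)⁻¹ * h⁻¹ = u ^ n * u ^ m := by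
      have h1 : (a * b) * h * (a * b)⁻¹ * h⁻¹
          = a * ((b * h * b⁻¹ * h⁻¹) * h) * a⁻¹ * h⁻¹ := by group
      rw [h1, ← hn]
      have h2 : a * (u ^ n * h) * a⁻¹ * h⁻¹ = a * u ^ n * h * a⁻¹ * h⁻¹ := by group
      rw [h2, (cau.zpow_right n).eq]
      have h3 : u ^ n * a * h * a⁻¹ * h⁻¹ = u ^ n * (a * h * a⁻¹ * h⁻¹) := by group
      rw [h3, ← hm]
    refine ⟨⟨?_, ?_, ⟨n + m, ?_⟩⟩, ?_⟩
    · rw [mul_assoc, hbu, ← mul_assoc, hau, mul_assoc]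
    · rw [mul_assoc, hb2, ← mul_assoc, ha2, mul_assoc]
    · simp only [key, zpow_add]
    · rw [key, ← hm, ← hn, ← zpow_add, ← zpow_add, add_comm]
  · ext g
    simp only [Set.mem_setOf_eq, SetLike.mem_coe, Subgroup.mem_center_iff]
    constructor
    · rintro ⟨⟨hgu, -, -⟩, hgh⟩
      rw [mul_inv_eq_one, mul_inv_eq_iff_eq_mul] at hgh
      have hall : ∀ x : G, Commute g x := by
        intro x
        have hx : x ∈ Subgroup.closure ({u, h} : Set G) := by rw [hgen]; trivial
        refine Subgroup.closure_induction (fun y hy => ?_) (Commute.one_right g)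
          (fun y z _ _ hy hz => hy.mul_right hz) (fun y _ hy => hy.inv_right) hx
        rcases hy with rfl | rfl
        · exact hgu
        · exact hgh
      exact fun x => (hall x).eq.symm
    · intro hz
      have hgu : g * u = u * g := (hz u).symm
      have hgh : g * h = h * g := (hz h).symm
      have h1 : g * h * g⁻¹ * h⁻¹ = 1 := by rw [hgh]; group
      exact ⟨⟨hgu, ((hz _).symm), by rw [h1]; exact Subgroup.one_mem _⟩, h1⟩
end

section
/- For an odd prime p, the number of solutions (x,y,z) ∈ F_p³ to x² + y² + z² − x·y·z = 0 with (x,y,z) ≠ (0,0,0) equals p(p+3) if p ≡ 1 (mod 4) and p(p−3) if p ≡ 3 (mod 4). -/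
open Finset

namespace MarkoffAux

variable {p : ℕ} [Fact p.Prime]

local notation "χ" => quadraticChar (ZMod p)

lemma mk_two_ne_zero (hp2 : p ≠ 2) : (2 : ZMod p) ≠ 0 := by
  intro h
  have hdvd : (p : ℕ) ∣ 2 := (ZMod.natCast_eq_zero_iff 2 p).mp (by exact_mod_cast h)
  have h1 := Nat.le_of_dvd (by norm_num) hdvd
  have h2 := (Fact.out (p := p.Prime)).two_le
  omega

lemma mk_four_ne_zero (hp2 : p ≠ 2) : (4 : ZMod p) ≠ 0 := by
  intro h
  apply mk_two_ne_zero hp2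
  have h4 : (4 : ZMod p) = 2 * 2 := by norm_num
  rw [h4] at h
  rcases mul_eq_zero.mp h with h | h <;> exact h

lemma mk_chi_four (hp2 : p ≠ 2) : χ (4 : ZMod p) = 1 := by
  have : ((2 : ZMod p) ^ 2) = 4 := by norm_num
  rw [← this]
  exact quadraticChar_sq_one' (mk_two_ne_zero hp2)

lemma mk_chi_sixteen (hp2 : p ≠ 2) : χ (16 : ZMod p) = 1 := by
  have : ((4 : ZMod p) ^ 2) = 16 := by norm_num
  rw [← this]
  exact quadraticChar_sq_one' (mk_four_ne_zero hp2)

/-- The number of roots of a monic quadratic is `1 + χ(disc)`. -/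
lemma card_quad (hp2 : p ≠ 2) (b c : ZMod p) :
    ((univ.filter (fun x : ZMod p => x ^ 2 + b * x + c = 0)).card : ℤ)
      = χ (b ^ 2 - 4 * c) + 1 := by
  have h2 : (2 : ZMod p) ≠ 0 := mk_two_ne_zero hp2
  have h4 : (4 : ZMod p) ≠ 0 := mk_four_ne_zero hp2
  have key : ∀ x : ZMod p, (x ^ 2 + b * x + c = 0) ↔ (2 * x + b) ^ 2 = b ^ 2 - 4 * c := by
    intro x
    rw [← sub_eq_zero (a := (2 * x + b) ^ 2)]
    have : (2 * x + b) ^ 2 - (b ^ 2 - 4 * c) = 4 * (x ^ 2 + b * x + c) := by ring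
    rw [this]
    constructor
    · intro h; rw [h, mul_zero]
    · intro h; rcases mul_eq_zero.mp h with h | h
      · exact absurd h h4
      · exact h
  have hcard : (univ.filter (fun x : ZMod p => x ^ 2 + b * x + c = 0)).card
      = (univ.filter (fun y : ZMod p => y ^ 2 = b ^ 2 - 4 * c)).card := by
    apply card_nbij' (fun x => 2 * x + b) (fun y => (y - b) * 2⁻¹)
    · intro x hx
      simp only [Finset.mem_coe, mem_filter, mem_univ, true_and] at hx ⊢
      exact (key x).mp hx
    · intro y hy
      simp only [Finset.mem_coe, mem_filter, mem_univ, true_and] at hy ⊢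
      rw [key]
      have : 2 * ((y - b) * 2⁻¹) + b = y := by field_simp; ring
      rw [this]; exact hy
    · intro x _; field_simp; ring
    · intro y _; field_simp; ring
  rw [hcard]
  have h := quadraticChar_card_sqrts (by rw [ZMod.ringChar_zmod_n]; exact hp2) (b ^ 2 - 4 * c)
  simp only [Set.toFinset_setOf] at h
  exact_mod_cast h

/-- fiberwise sum over squares -/
lemma sum_over_squares (hp2 : p ≠ 2) (f : ZMod p → ℤ) :
    ∑ y : ZMod p, f (y ^ 2) = ∑ u : ZMod p, (χ u + 1) * f u := by
  rw [← Finset.sum_fiberwise' univ (fun y : ZMod p => y ^ 2) f]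
  refine Finset.sum_congr rfl fun u _ => ?_
  rw [Finset.sum_const, nsmul_eq_mul]
  congr 1
  have h := quadraticChar_card_sqrts (by rw [ZMod.ringChar_zmod_n]; exact hp2) u
  simp only [Set.toFinset_setOf] at h
  exact_mod_cast h

lemma sum_chi_sq_add (hp2 : p ≠ 2) (c : ZMod p) (hc : c ≠ 0) :
    ∑ y : ZMod p, χ (y ^ 2 + c) = -1 := by
  have hchar : ringChar (ZMod p) ≠ 2 := by rw [ZMod.ringChar_zmod_n]; exact hp2
  rw [sum_over_squares hp2 (fun u => χ (u + c))]
  have split : ∀ u : ZMod p, (χ u + 1) * χ (u + c) = χ u * χ (u + c) + χ (u + c) := by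
    intro u; ring
  rw [Finset.sum_congr rfl (fun u _ => split u), Finset.sum_add_distrib]
  have h2 : ∑ u : ZMod p, χ (u + c) = 0 := by
    exact (Fintype.sum_equiv (Equiv.addRight c) (fun u : ZMod p => χ (u + c))
      (fun v => χ v) (fun u => rfl)).trans (quadraticChar_sum_zero hchar)
  rw [h2, add_zero]
  have step1 : ∑ u : ZMod p, χ u * χ (u + c)
      = ∑ u ∈ univ.erase (0 : ZMod p), χ (1 + c * u⁻¹) := by
    rw [← Finset.add_sum_erase _ _ (Finset.mem_univ (0 : ZMod p))]
    rw [MulChar.map_zero, zero_mul, zero_add]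
    refine Finset.sum_congr rfl fun u hu => ?_
    have hu0 : u ≠ 0 := (Finset.mem_erase.mp hu).1
    have : u * (u + c) = u ^ 2 * (1 + c * u⁻¹) := by field_simp
    rw [← map_mul, this, map_mul, quadraticChar_sq_one' hu0, one_mul]
  rw [step1]
  have step2 : ∑ u ∈ univ.erase (0 : ZMod p), χ (1 + c * u⁻¹)
      = ∑ v ∈ univ.erase (1 : ZMod p), χ v := by
    apply Finset.sum_nbij' (fun u => 1 + c * u⁻¹) (fun v => c * (v - 1)⁻¹)
    · intro u hu
      have hu0 : u ≠ 0 := (Finset.mem_erase.mp hu).1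
      refine Finset.mem_erase.mpr ⟨?_, Finset.mem_univ _⟩
      intro h
      have : c * u⁻¹ = 0 := by linear_combination h
      rcases mul_eq_zero.mp this with h' | h'
      · exact hc h'
      · exact hu0 (inv_eq_zero.mp h')
    · intro v hv
      have hv1 : v ≠ 1 := (Finset.mem_erase.mp hv).1
      refine Finset.mem_erase.mpr ⟨?_, Finset.mem_univ _⟩
      intro h
      rcases mul_eq_zero.mp h with h' | h'
      · exact hc h'
      · exact absurd h' (inv_ne_zero (sub_ne_zero.mpr hv1))
    · intro u hu
      have hu0 : u ≠ 0 := (Finset.mem_erase.mp hu).1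
      field_simp
      rw [add_sub_cancel_left, div_self hc]
    · intro v hv
      have hv1 : v - 1 ≠ 0 := sub_ne_zero.mpr (Finset.mem_erase.mp hv).1
      field_simp
      ring
    · intro u _; rfl
  rw [step2]
  have h3 := quadraticChar_sum_zero hchar
  rw [← Finset.add_sum_erase _ _ (Finset.mem_univ (1 : ZMod p)), MulChar.map_one] at h3
  linarith

lemma mk_sum_chi_sq (hp2 : p ≠ 2) : ∑ y : ZMod p, χ (y ^ 2) = (p : ℤ) - 1 := by
  have h1 : ∀ y : ZMod p, χ (y ^ 2) = if y = 0 then 0 else 1 := by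
    intro y
    by_cases hy : y = 0
    · simp [hy]
    · simp [hy, quadraticChar_sq_one' hy]
  rw [Finset.sum_congr rfl (fun y _ => h1 y)]
  have h2 : ∀ y : ZMod p, (if y = 0 then (0:ℤ) else 1) = 1 - (if y = 0 then 1 else 0) := by
    intro y; split <;> ring
  rw [Finset.sum_congr rfl (fun y _ => h2 y), Finset.sum_sub_distrib, Finset.sum_const,
    Finset.sum_ite_eq' univ (0 : ZMod p) (fun _ => (1:ℤ))]
  simp [ZMod.card]

lemma sum_chi_ay2_b (hp2 : p ≠ 2) (a b : ZMod p) (ha : a ≠ 0) (hb : b ≠ 0) :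
    ∑ y : ZMod p, χ (a * y ^ 2 + b) = -χ a := by
  have key : ∀ y : ZMod p, a * y ^ 2 + b = a * (y ^ 2 + b * a⁻¹) := by
    intro y; field_simp
  rw [Finset.sum_congr rfl (fun y _ => by rw [key y, map_mul]), ← Finset.mul_sum,
    sum_chi_sq_add hp2 (b * a⁻¹) (mul_ne_zero hb (inv_ne_zero ha))]
  ring

/-- the inner sum over `y` for fixed `z` -/
lemma sum_W (hp2 : p ≠ 2) :
    ∑ z : ZMod p, ∑ y : ZMod p, χ ((z ^ 2 - 4) * y ^ 2 - 4 * z ^ 2)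
      = 1 + 3 * (p : ℤ) * χ (-1) := by
  have h2 : (2 : ZMod p) ≠ 0 := mk_two_ne_zero hp2
  have h4 : (4 : ZMod p) ≠ 0 := mk_four_ne_zero hp2
  set W : ZMod p → ℤ := fun z => ∑ y : ZMod p, χ ((z ^ 2 - 4) * y ^ 2 - 4 * z ^ 2) with hW
  have h02 : (0 : ZMod p) ≠ 2 := fun h => h2 h.symm
  have h0m2 : (0 : ZMod p) ≠ -2 := by
    intro h; apply h2; linear_combination h
  have h2m2 : (2 : ZMod p) ≠ -2 := by
    intro h; apply h4; linear_combination h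
  set s : Finset (ZMod p) := {0, 2, -2} with hs
  have hnotmem1 : (0 : ZMod p) ∉ ({2, -2} : Finset (ZMod p)) := by
    simp [h02, h0m2]
  have hnotmem2 : (2 : ZMod p) ∉ ({-2} : Finset (ZMod p)) := by simp [h2m2]
  -- generic term
  have hgen : ∀ z ∈ univ \ s, W z = -χ (z ^ 2 - 4) := by
    intro z hz
    simp only [hs, Finset.mem_sdiff, Finset.mem_insert, Finset.mem_singleton, Finset.mem_univ,
      true_and, not_or] at hz
    obtain ⟨hz0, hz2, hzm2⟩ := hz
    have ha : z ^ 2 - 4 ≠ 0 := by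
      intro h
      have : (z - 2) * (z + 2) = 0 := by linear_combination h
      rcases mul_eq_zero.mp this with h' | h'
      · exact hz2 (by linear_combination h')
      · exact hzm2 (by linear_combination h')
    have hb : -(4 * z ^ 2) ≠ 0 := by
      intro h
      have : (4 : ZMod p) * z ^ 2 = 0 := by linear_combination -h
      rcases mul_eq_zero.mp this with h' | h'
      · exact h4 h'
      · exact hz0 (pow_eq_zero_iff (by norm_num)|>.mp h')
    have hsum := sum_chi_ay2_b hp2 (z ^ 2 - 4) (-(4 * z ^ 2)) ha hb
    rw [hW]
    have harg : ∀ y : ZMod p,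
        (z ^ 2 - 4) * y ^ 2 - 4 * z ^ 2 = (z ^ 2 - 4) * y ^ 2 + -(4 * z ^ 2) :=
      fun y => by ring
    exact (Finset.sum_congr rfl (fun y _ => by rw [harg y])).trans hsum
  -- special values
  have hW0 : W 0 = ((p : ℤ) - 1) * χ (-1) := by
    rw [hW]
    have harg : ∀ y : ZMod p,
        ((0 : ZMod p) ^ 2 - 4) * y ^ 2 - 4 * (0:ZMod p) ^ 2 = (-1) * 4 * y ^ 2 := fun y => by ring
    calc ∑ y : ZMod p, χ (((0:ZMod p) ^ 2 - 4) * y ^ 2 - 4 * (0:ZMod p) ^ 2)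
        = ∑ y : ZMod p, χ (-1) * χ (y ^ 2) := by
          refine Finset.sum_congr rfl fun y _ => ?_
          rw [harg y, map_mul, map_mul, mk_chi_four hp2, mul_one]
      _ = χ (-1) * ∑ y : ZMod p, χ (y ^ 2) := by rw [Finset.mul_sum]
      _ = ((p : ℤ) - 1) * χ (-1) := by rw [mk_sum_chi_sq hp2]; ring
  have hW2 : ∀ z : ZMod p, z ^ 2 = 4 → W z = (p : ℤ) * χ (-1) := by
    intro z hz
    rw [hW]
    have harg : ∀ y : ZMod p,
        (z ^ 2 - 4) * y ^ 2 - 4 * z ^ 2 = (-1) * 16 := by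
      intro y; rw [hz]; ring
    calc ∑ y : ZMod p, χ ((z ^ 2 - 4) * y ^ 2 - 4 * z ^ 2)
        = ∑ _y : ZMod p, χ (-1) := by
          refine Finset.sum_congr rfl fun y _ => ?_
          rw [harg y, map_mul, mk_chi_sixteen hp2, mul_one]
      _ = (p : ℤ) * χ (-1) := by
          rw [Finset.sum_const, nsmul_eq_mul, Finset.card_univ, ZMod.card]
  -- assemble
  have hsubset : s ⊆ univ := Finset.subset_univ s
  rw [show (univ : Finset (ZMod p)) = (univ \ s) ∪ s by
    rw [Finset.sdiff_union_of_subset hsubset]]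
  rw [Finset.sum_union (Finset.sdiff_disjoint)]
  have hG : ∑ z ∈ univ \ s, W z = ∑ z ∈ univ \ s, -χ (z ^ 2 - 4) :=
    Finset.sum_congr rfl hgen
  have hGall : ∑ z : ZMod p, -χ (z ^ 2 - 4) = 1 := by
    have harg : ∀ z : ZMod p, z ^ 2 - 4 = z ^ 2 + (-4) := fun z => by ring
    have h4' : (-4 : ZMod p) ≠ 0 := fun h => h4 (by linear_combination -h)
    rw [Finset.sum_congr rfl (fun z _ => by rw [harg z])]
    rw [Finset.sum_neg_distrib, sum_chi_sq_add hp2 (-4) h4']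
    norm_num
  have hGsplit : ∑ z ∈ univ \ s, -χ (z ^ 2 - 4)
      = (∑ z : ZMod p, -χ (z ^ 2 - 4)) - ∑ z ∈ s, -χ (z ^ 2 - 4) := by
    rw [eq_sub_iff_add_eq, Finset.sum_sdiff hsubset]
  have hGs : ∑ z ∈ s, -χ (z ^ 2 - 4) = -χ (-1) := by
    rw [hs, Finset.sum_insert hnotmem1, Finset.sum_insert hnotmem2, Finset.sum_singleton]
    have e0 : ((0 : ZMod p) ^ 2 - 4) = (-1) * 4 := by ring
    have e2 : ((2 : ZMod p) ^ 2 - 4) = 0 := by ring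
    have em2 : ((-2 : ZMod p) ^ 2 - 4) = 0 := by ring
    rw [e0, e2, em2, map_mul, mk_chi_four hp2, mul_one, MulChar.map_zero]
    ring
  have hWs : ∑ z ∈ s, W z = ((p:ℤ) - 1) * χ (-1) + (p:ℤ) * χ (-1) + (p:ℤ) * χ (-1) := by
    rw [hs, Finset.sum_insert hnotmem1, Finset.sum_insert hnotmem2, Finset.sum_singleton]
    rw [hW0, hW2 2 (by norm_num), hW2 (-2) (by ring)]; ring
  rw [hG, hGsplit, hGall, hGs, hWs]
  ring

/-- Total number of points on the Markoff surface (including the origin), as an integer. -/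
lemma total_count (hp2 : p ≠ 2) :
    (((univ : Finset (ZMod p × ZMod p × ZMod p)).filter
        (fun v => v.1 ^ 2 + v.2.1 ^ 2 + v.2.2 ^ 2 - v.1 * v.2.1 * v.2.2 = 0)).card : ℤ)
      = (p : ℤ) * p + 3 * p * χ (-1) + 1 := by
  rw [Finset.card_filter]
  push_cast
  rw [Fintype.sum_prod_type, Finset.sum_comm, Fintype.sum_prod_type]
  have inner : ∀ y z : ZMod p,
      (∑ x : ZMod p, if (x ^ 2 + y ^ 2 + z ^ 2 - x * y * z = 0) then (1:ℤ) else 0)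
        = χ ((z ^ 2 - 4) * y ^ 2 - 4 * z ^ 2) + 1 := by
    intro y z
    have hcond : ∀ x : ZMod p,
        (x ^ 2 + y ^ 2 + z ^ 2 - x * y * z = 0) ↔ (x ^ 2 + (-(y * z)) * x + (y ^ 2 + z ^ 2) = 0) := by
      intro x; constructor <;> intro h <;> linear_combination h
    calc (∑ x : ZMod p, if (x ^ 2 + y ^ 2 + z ^ 2 - x * y * z = 0) then (1:ℤ) else 0)
        = ∑ x : ZMod p, if (x ^ 2 + (-(y * z)) * x + (y ^ 2 + z ^ 2) = 0) then (1:ℤ) else 0 :=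
          Finset.sum_congr rfl fun x _ => if_congr (hcond x) rfl rfl
      _ = ((univ.filter (fun x : ZMod p =>
            x ^ 2 + (-(y * z)) * x + (y ^ 2 + z ^ 2) = 0)).card : ℤ) := by
          rw [Finset.sum_boole]
      _ = χ ((-(y * z)) ^ 2 - 4 * (y ^ 2 + z ^ 2)) + 1 := card_quad hp2 _ _
      _ = χ ((z ^ 2 - 4) * y ^ 2 - 4 * z ^ 2) + 1 := by
          congr 2; ring
  calc ∑ y : ZMod p, ∑ z : ZMod p,
          (∑ x : ZMod p, if (x ^ 2 + y ^ 2 + z ^ 2 - x * y * z = 0) then (1:ℤ) else 0)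
      = ∑ y : ZMod p, ∑ z : ZMod p, (χ ((z ^ 2 - 4) * y ^ 2 - 4 * z ^ 2) + 1) :=
        Finset.sum_congr rfl fun y _ => Finset.sum_congr rfl fun z _ => inner y z
    _ = ∑ z : ZMod p, ∑ y : ZMod p, (χ ((z ^ 2 - 4) * y ^ 2 - 4 * z ^ 2) + 1) :=
        Finset.sum_comm
    _ = ∑ z : ZMod p, ((∑ y : ZMod p, χ ((z ^ 2 - 4) * y ^ 2 - 4 * z ^ 2)) + (p : ℤ)) := by
        refine Finset.sum_congr rfl fun z _ => ?_
        rw [Finset.sum_add_distrib, Finset.sum_const, nsmul_eq_mul, Finset.card_univ, ZMod.card,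
          mul_one]
    _ = (∑ z : ZMod p, ∑ y : ZMod p, χ ((z ^ 2 - 4) * y ^ 2 - 4 * z ^ 2))
          + ∑ _z : ZMod p, (p : ℤ) := by rw [Finset.sum_add_distrib]
    _ = (1 + 3 * (p : ℤ) * χ (-1)) + (p : ℤ) * (p : ℤ) := by
        rw [sum_W hp2, Finset.sum_const, nsmul_eq_mul, Finset.card_univ, ZMod.card]
    _ = (p : ℤ) * p + 3 * p * χ (-1) + 1 := by ring

end MarkoffAux

open MarkoffAux in
/-- For an odd prime `p`, the number of nonzero `F_p`-points of the Markoff surface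
`x² + y² + z² - xyz = 0` is `p(p+3)` if `p ≡ 1 (mod 4)` and `p(p-3)` if `p ≡ 3 (mod 4)`. -/
theorem markoff_point_count (p : ℕ) [Fact p.Prime] (hodd : Odd p) :
    (p % 4 = 1 →
      Nat.card {v : ZMod p × ZMod p × ZMod p //
          v.1 ^ 2 + v.2.1 ^ 2 + v.2.2 ^ 2 - v.1 * v.2.1 * v.2.2 = 0 ∧ v ≠ (0, 0, 0)} =
        p * (p + 3)) ∧
    (p % 4 = 3 →
      Nat.card {v : ZMod p × ZMod p × ZMod p //
          v.1 ^ 2 + v.2.1 ^ 2 + v.2.2 ^ 2 - v.1 * v.2.1 * v.2.2 = 0 ∧ v ≠ (0, 0, 0)} =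
        p * (p - 3)) := by
  have hp2 : p ≠ 2 := by
    obtain ⟨k, hk⟩ := hodd; omega
  have hchar : ringChar (ZMod p) ≠ 2 := by rw [ZMod.ringChar_zmod_n]; exact hp2
  set P : ZMod p × ZMod p × ZMod p → Prop :=
    fun v => v.1 ^ 2 + v.2.1 ^ 2 + v.2.2 ^ 2 - v.1 * v.2.1 * v.2.2 = 0 with hP
  have hmem : ((0,0,0) : ZMod p × ZMod p × ZMod p) ∈ univ.filter P := by
    rw [Finset.mem_filter]
    refine ⟨Finset.mem_univ _, ?_⟩
    simp [hP]
  have hcards : Nat.card {v : ZMod p × ZMod p × ZMod p // P v ∧ v ≠ (0, 0, 0)}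
      = (univ.filter P).card - 1 := by
    rw [Nat.card_eq_fintype_card, Fintype.card_subtype]
    have hfe : univ.filter (fun v : ZMod p × ZMod p × ZMod p => P v ∧ v ≠ (0,0,0))
        = (univ.filter P).erase (0,0,0) := by
      ext v
      simp only [Finset.mem_filter, Finset.mem_erase, Finset.mem_univ, true_and]
      tauto
    rw [hfe, Finset.card_erase_of_mem hmem]
  have hcard1 : 1 ≤ (univ.filter P).card := Finset.card_pos.mpr ⟨_, hmem⟩
  constructor
  · intro h1
    have hχ : quadraticChar (ZMod p) (-1) = 1 := by
      rw [quadraticChar_neg_one hchar, ZMod.card]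
      exact ZMod.χ₄_nat_one_mod_four h1
    have hN : ((univ.filter P).card : ℤ) = ((p * p + 3 * p + 1 : ℕ) : ℤ) := by
      simp only [hP]
      rw [total_count hp2, hχ]
      push_cast; ring
    have hNn : (univ.filter P).card = p * p + 3 * p + 1 := by exact_mod_cast hN
    rw [hcards, hNn]
    have : p * (p + 3) = p * p + 3 * p := by ring
    omega
  · intro h3
    have hχ : quadraticChar (ZMod p) (-1) = -1 := by
      rw [quadraticChar_neg_one hchar, ZMod.card]
      exact ZMod.χ₄_nat_three_mod_four h3
    have hp3 : 3 ≤ p := by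
      have := (Fact.out (p := p.Prime)).two_le
      omega
    have hmul : 3 * p ≤ p * p := Nat.mul_le_mul_right p hp3
    have hN : ((univ.filter P).card : ℤ) = ((p * p - 3 * p + 1 : ℕ) : ℤ) := by
      simp only [hP]
      rw [total_count hp2, hχ, Nat.cast_add, Nat.cast_sub hmul]
      push_cast; ring
    have hNn : (univ.filter P).card = p * p - 3 * p + 1 := by exact_mod_cast hN
    rw [hcards, hNn]
    have hd : p * (p - 3) + 3 * p = p * p := by
      calc p * (p - 3) + 3 * p = p * ((p - 3) + 3) := by ring
        _ = p * p := by rw [Nat.sub_add_cancel hp3]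
    set a := p * (p - 3)
    set b := p * p
    omega
end

section
/- Let A be a commutative ring and I ⊂ A an ideal that is flat as an A-module, and let e ≥ 1. Then the multiplication map induces an isomorphism of A-modules I^{⊗e} ≅ I^e, and moreover the natural map I^{⊗e} ⊗_A (A/I) → (I/I²)^{⊗e} sending (x₁⊗···⊗x_e)⊗a to a·(x̄₁⊗···⊗x̄_e) is an isomorphism, where x̄ᵢ denotes the image of xᵢ in I/I². -/
open scoped TensorProduct
open PiTensorProduct TensorPower

section Aux
variable {A : Type*} [CommRing A]

/-- Multiplication `J ⊗ K → J*K` is an isomorphism when `K` is flat. -/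
noncomputable def idealMulEquivAux (J K : Ideal A) [Module.Flat A K] :
    { g : (J ⊗[A] K) ≃ₗ[A] (J * K : Ideal A) //
      ∀ (x : J) (y : K), (g (x ⊗ₜ[A] y) : A) = (x : A) * (y : A) } := by
  classical
  let f : (J ⊗[A] K) →ₗ[A] A :=
    TensorProduct.lift ((LinearMap.mul A A).compl₁₂ J.subtype K.subtype)
  have hftmul : ∀ (x : J) (y : K), f (x ⊗ₜ[A] y) = (x : A) * (y : A) := by
    intro x y; simp [f]
  have hf : Function.Injective f := by
    have hcomp : f = K.subtype ∘ₗ (TensorProduct.lid A ↥K).toLinearMap ∘ₗ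
        (LinearMap.rTensor ↥K J.subtype) := by
      apply TensorProduct.ext'
      intro x y
      simp [f]
    rw [hcomp]
    simp only [LinearMap.coe_comp, LinearEquiv.coe_coe]
    exact K.injective_subtype.comp
      ((TensorProduct.lid A ↥K).injective.comp
        (Module.Flat.rTensor_preserves_injective_linearMap J.subtype J.injective_subtype))
  have hrange : LinearMap.range f = (J * K : Ideal A) := by
    apply le_antisymm
    · rintro _ ⟨t, rfl⟩
      induction t with
      | zero => simp
      | tmul x y => rw [hftmul]; exact Ideal.mul_mem_mul x.2 y.2
      | add u v hu hv => rw [map_add]; exact add_mem hu hv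
    · intro z hz
      refine Submodule.smul_induction_on hz ?_ ?_
      · intro r hr n hn
        exact ⟨(⟨r, hr⟩ : J) ⊗ₜ[A] (⟨n, hn⟩ : K), by rw [hftmul]; rfl⟩
      · rintro u v ⟨s, rfl⟩ ⟨t, rfl⟩
        exact ⟨s + t, by rw [map_add]⟩
  refine ⟨(LinearEquiv.ofInjective f hf).trans (LinearEquiv.ofEq _ _ hrange), ?_⟩
  intro x y
  rw [LinearEquiv.trans_apply, LinearEquiv.coe_ofEq_apply, LinearEquiv.ofInjective_apply, hftmul]

/-- Part 1 by induction. -/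
theorem part1Aux (I : Ideal A) [Module.Flat A I] (e : ℕ) :
    ∃ φ : (⨂[A] (_ : Fin (e + 1)), I) ≃ₗ[A] (I ^ (e + 1) : Ideal A),
      ∀ x : Fin (e + 1) → I,
        (φ (PiTensorProduct.tprod A x) : A) = ∏ i, (x i : A) := by
  induction e with
  | zero =>
    refine ⟨(PiTensorProduct.subsingletonEquiv (0 : Fin 1)).trans
      (LinearEquiv.ofEq _ _ (pow_one I).symm), ?_⟩
    intro x
    simp [PiTensorProduct.subsingletonEquiv_apply_tprod]
  | succ e ih =>
    obtain ⟨φ, hφ⟩ := ih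
    obtain ⟨θ, hθ⟩ := idealMulEquivAux (I ^ (e + 1)) I
    refine ⟨(TensorPower.mulEquiv (n := e + 1) (m := 1)).symm.trans
      ((TensorProduct.congr φ (PiTensorProduct.subsingletonEquiv (0 : Fin 1))).trans
        (θ.trans (LinearEquiv.ofEq _ _ (pow_succ I (e + 1)).symm))), ?_⟩
    intro x
    set a : Fin (e + 1) → I := fun i => x i.castSucc with ha
    set b : Fin 1 → I := fun _ => x (Fin.last (e + 1)) with hb
    have happ : Fin.append a b = x := by
      funext i
      induction i using Fin.lastCases with
      | last =>
        have h0 : Fin.last (e + 1) = Fin.natAdd (e + 1) (0 : Fin 1) := by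
          ext; simp
        rw [h0, Fin.append_right, ← h0]
      | cast i => exact Fin.append_left a b i
    have hsymm : (TensorPower.mulEquiv (n := e + 1) (m := 1)).symm
        (PiTensorProduct.tprod A x) =
        (PiTensorProduct.tprod A a) ⊗ₜ[A] (PiTensorProduct.tprod A b) := by
      rw [LinearEquiv.symm_apply_eq]
      have := TensorPower.tprod_mul_tprod A a b
      rw [TensorPower.gMul_def] at this
      rw [this, happ]
    simp only [LinearEquiv.trans_apply, hsymm, TensorProduct.congr_tmul,
      PiTensorProduct.subsingletonEquiv_apply_tprod]
    rw [LinearEquiv.coe_ofEq_apply, hθ, hφ]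
    conv_rhs => rw [Fin.prod_univ_castSucc]

noncomputable def cotEquivAux (I : Ideal A) :
    (↥I ⊗[A] (A ⧸ I)) ≃ₗ[A] I.Cotangent :=
  TensorProduct.tensorQuotEquivQuotSMul ↥I I

theorem cotEquivAux_tmul (I : Ideal A) (x : I) (a : A) :
    cotEquivAux I (x ⊗ₜ[A] Ideal.Quotient.mk I a) = a • I.toCotangent x := by
  show TensorProduct.tensorQuotEquivQuotSMul ↥I I (x ⊗ₜ[A] Ideal.Quotient.mk I a) = _
  rw [TensorProduct.tensorQuotEquivQuotSMul_tmul_mk]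
  show Submodule.Quotient.mk (a • x) = _
  rw [← map_smul]
  rfl

theorem quot_tmul_eq (I : Ideal A) (q : A ⧸ I) (a : A) :
    q ⊗ₜ[A] (Ideal.Quotient.mk I a) = (q * Ideal.Quotient.mk I a) ⊗ₜ[A] (1 : A ⧸ I) := by
  have ha : (Ideal.Quotient.mk I a : A ⧸ I) = a • (1 : A ⧸ I) := by
    rw [Algebra.smul_def, _root_.mul_one, Ideal.Quotient.algebraMap_eq]
  rw [ha, TensorProduct.tmul_smul, TensorProduct.smul_tmul', mul_smul_comm, _root_.mul_one]

noncomputable def diagAux (I : Ideal A) : (A ⧸ I) ≃ₗ[A] ((A ⧸ I) ⊗[A] (A ⧸ I)) :=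
  LinearEquiv.ofLinear ((TensorProduct.mk A (A ⧸ I) (A ⧸ I)).flip 1)
    (LinearMap.mul' A (A ⧸ I))
    (by
      apply TensorProduct.ext'
      intro q q'
      obtain ⟨a, rfl⟩ := Ideal.Quotient.mk_surjective q'
      simp only [LinearMap.coe_comp, Function.comp_apply, LinearMap.mul'_apply,
        LinearMap.flip_apply, TensorProduct.mk_apply, LinearMap.id_apply]
      exact (quot_tmul_eq I q a).symm)
    (by
      apply LinearMap.ext
      intro q
      simp [LinearMap.mul'_apply])

theorem diagAux_mk (I : Ideal A) (a : A) :
    diagAux I (Ideal.Quotient.mk I a) = (Ideal.Quotient.mk I a) ⊗ₜ[A] (1 : A ⧸ I) := rfl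


theorem finSnocAppendAux {α : Sort*} {n : ℕ} (x : Fin (n + 1) → α) :
    Fin.append (fun i : Fin n => x i.castSucc) (fun _ : Fin 1 => x (Fin.last n)) = x := by
  funext i
  induction i using Fin.lastCases with
  | last =>
    have h0 : Fin.last n = Fin.natAdd n (0 : Fin 1) := by ext; simp
    rw [h0, Fin.append_right, ← h0]
  | cast i => exact Fin.append_left _ _ i

theorem part2Aux (I : Ideal A) (e : ℕ) :
    ∃ ψ : ((⨂[A] (_ : Fin (e + 1)), ↥I) ⊗[A] (A ⧸ I)) ≃ₗ[A]
        (⨂[A] (_ : Fin (e + 1)), I.Cotangent),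
      ∀ (x : Fin (e + 1) → I) (a : A),
        ψ (PiTensorProduct.tprod A x ⊗ₜ[A] (Ideal.Quotient.mk I a)) =
          a • PiTensorProduct.tprod A fun i => I.toCotangent (x i) := by
  induction e with
  | zero =>
    refine ⟨(TensorProduct.congr (PiTensorProduct.subsingletonEquiv (0 : Fin 1))
        (LinearEquiv.refl A (A ⧸ I))).trans ((cotEquivAux I).trans
        (PiTensorProduct.subsingletonEquiv (s := fun _ => I.Cotangent) (0 : Fin 1)).symm), ?_⟩
    intro x a
    simp only [LinearEquiv.trans_apply, TensorProduct.congr_tmul,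
      PiTensorProduct.subsingletonEquiv_apply_tprod, LinearEquiv.refl_apply,
      cotEquivAux_tmul, map_smul]
    congr 1
    rw [LinearEquiv.symm_apply_eq, PiTensorProduct.subsingletonEquiv_apply_tprod]
  | succ e ih =>
    obtain ⟨ψ, hψ⟩ := ih
    set ε : (⨂[A] (_ : Fin (e + 1 + 1)), ↥I) ≃ₗ[A] ((⨂[A] (_ : Fin (e + 1)), ↥I) ⊗[A] ↥I) :=
      (TensorPower.mulEquiv (n := e + 1) (m := 1)).symm.trans
        (TensorProduct.congr (LinearEquiv.refl A _)
          (PiTensorProduct.subsingletonEquiv (0 : Fin 1))) with hε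
    refine ⟨(TensorProduct.congr ε (diagAux I)).trans
      ((TensorProduct.tensorTensorTensorComm A _ _ _ _).trans
        ((TensorProduct.congr ψ (cotEquivAux I)).trans
          ((TensorProduct.congr (LinearEquiv.refl A _)
            (PiTensorProduct.subsingletonEquiv (0 : Fin 1)).symm).trans
            (TensorPower.mulEquiv (n := e + 1) (m := 1))))), ?_⟩
    intro x a
    set b1 : Fin (e + 1) → ↥I := fun i => x i.castSucc with hb1
    have happ : Fin.append b1 (fun _ : Fin 1 => x (Fin.last (e + 1))) = x :=
      finSnocAppendAux x
    have hsymm : (TensorPower.mulEquiv (n := e + 1) (m := 1)).symm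
        (PiTensorProduct.tprod A x) =
        (PiTensorProduct.tprod A b1) ⊗ₜ[A]
          (PiTensorProduct.tprod A (fun _ : Fin 1 => x (Fin.last (e + 1)))) := by
      rw [LinearEquiv.symm_apply_eq]
      have h := TensorPower.tprod_mul_tprod A b1 (fun _ : Fin 1 => x (Fin.last (e + 1)))
      rw [TensorPower.gMul_def] at h
      rw [h, happ]
    have hεx : ε (PiTensorProduct.tprod A x) =
        (PiTensorProduct.tprod A b1) ⊗ₜ[A] (x (Fin.last (e + 1))) := by
      rw [hε, LinearEquiv.trans_apply, hsymm, TensorProduct.congr_tmul,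
        LinearEquiv.refl_apply, PiTensorProduct.subsingletonEquiv_apply_tprod]
    have hmul2 : TensorPower.mulEquiv (n := e + 1) (m := 1)
        ((PiTensorProduct.tprod A fun i => I.toCotangent (b1 i)) ⊗ₜ[A]
          (PiTensorProduct.tprod A fun _ : Fin 1 => I.toCotangent (x (Fin.last (e + 1))))) =
        PiTensorProduct.tprod A fun i => I.toCotangent (x i) := by
      have h := TensorPower.tprod_mul_tprod A (fun i => I.toCotangent (b1 i))
        (fun _ : Fin 1 => I.toCotangent (x (Fin.last (e + 1))))
      rw [TensorPower.gMul_def] at h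
      rw [h]
      congr 1
      exact finSnocAppendAux (fun i => I.toCotangent (x i))
    have hsub : (PiTensorProduct.subsingletonEquiv (0 : Fin 1)).symm
        (I.toCotangent (x (Fin.last (e + 1)))) =
        PiTensorProduct.tprod A (fun _ : Fin 1 => I.toCotangent (x (Fin.last (e + 1)))) := by
      rw [LinearEquiv.symm_apply_eq, PiTensorProduct.subsingletonEquiv_apply_tprod]
    have h1 : (1 : A ⧸ I) = Ideal.Quotient.mk I 1 := rfl
    rw [LinearEquiv.trans_apply, TensorProduct.congr_tmul, hεx, diagAux_mk,
      LinearEquiv.trans_apply, TensorProduct.tensorTensorTensorComm_tmul,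
      LinearEquiv.trans_apply, TensorProduct.congr_tmul, hψ, h1, cotEquivAux_tmul, one_smul,
      LinearEquiv.trans_apply, TensorProduct.congr_tmul, LinearEquiv.refl_apply, hsub,
      ← TensorProduct.smul_tmul', map_smul, hmul2]

end Aux


/-- For a flat ideal `I ⊂ A` and `e ≥ 1`, multiplication induces an isomorphism
`I^{⊗e} ≅ Iᵉ`, and the natural map `I^{⊗e} ⊗_A (A/I) → (I/I²)^{⊗e}` sending
`(x₁⊗⋯⊗x_e)⊗a` to `a·(x̄₁⊗⋯⊗x̄_e)` is an isomorphism. -/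
theorem tensor_power_of_flat_ideal (A : Type*) [CommRing A] (I : Ideal A)
    [Module.Flat A I] (e : ℕ) (he : 1 ≤ e) :
    (∃ φ : (⨂[A] (_ : Fin e), I) ≃ₗ[A] (I ^ e : Ideal A),
      ∀ x : Fin e → I,
        (φ (PiTensorProduct.tprod A x) : A) = ∏ i, (x i : A)) ∧
    (∃ ψ : ((⨂[A] (_ : Fin e), I) ⊗[A] (A ⧸ I)) ≃ₗ[A] (⨂[A] (_ : Fin e), I.Cotangent),
      ∀ (x : Fin e → I) (a : A),
        ψ (PiTensorProduct.tprod A x ⊗ₜ[A] (Ideal.Quotient.mk I a)) =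
          a • PiTensorProduct.tprod A fun i => I.toCotangent (x i)) := by
  obtain ⟨n, rfl⟩ : ∃ n, e = n + 1 := ⟨e - 1, (Nat.succ_pred_eq_of_pos he).symm⟩
  exact ⟨part1Aux I n, part2Aux I n⟩
end
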